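/- arXiv:1202.5151 — 2 statements merged into one kernel-verified Lean document; each statement's English description precedes it below -/
import Mathlib

section
/- Suppose the augmented model Y = Σ_{r=1}^k α_r ξ_r + Σ_{j=1}^p β_j X_j + ε holds, where ξ_r = ψ_rᵀW/√(pλ_r) are standardized uncorrelated factors with Var(ξ_r) = 1, X = W + Z with W and Z uncorrelated, Z has uncorrelated coordinates with variances σ_j² ≥ D₁ > 0, and ψ_r are orthonormal eigenvectors of Γ = E(WWᵀ) with E((ψ_rᵀW)²) = pλ_r. Then for any alternative coefficients α* ∈ ℝ^k and β* ∈ ℝ^p, E([Σ_r (α_r − α*_r) ξ_r + Σ_j (β_j − β*_j) X_j]²) ≥ Σ_{r=1}^k (α_r − α*_r + √(pλ_r) ψ_rᵀ(β − β*))² + D₁ ‖β − β*‖₂². In particular, the coefficients (α, β) of the augmented model are unique. -/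
open MeasureTheory Matrix

section helpers
variable {Ω : Type*} [MeasurableSpace Ω] {μ : Measure Ω}

lemma l2_integrable_mul {f g : Ω → ℝ} (hf : MemLp f 2 μ) (hg : MemLp g 2 μ) :
    Integrable (fun ω => f ω * g ω) μ := by
  have h : Integrable (fun ω => ((f + g) ω ^ 2 - f ω ^ 2 - g ω ^ 2) / 2) μ :=
    (((hf.add hg).integrable_sq.sub hf.integrable_sq).sub hg.integrable_sq).div_const 2
  refine h.congr (Filter.Eventually.of_forall fun ω => ?_)
  simp only [Pi.add_apply]
  ring

lemma integral_sq_sum {ι : Type*} [Fintype ι] (f : ι → Ω → ℝ)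
    (hf : ∀ i, MemLp (f i) 2 μ) :
    ∫ ω, (∑ i, f i ω) ^ 2 ∂μ = ∑ i, ∑ j, ∫ ω, f i ω * f j ω ∂μ := by
  have hpt : ∀ ω, (∑ i, f i ω) ^ 2 = ∑ i, ∑ j, f i ω * f j ω := by
    intro ω; rw [sq, Finset.sum_mul_sum]
  simp_rw [hpt]
  rw [integral_finset_sum _ fun i _ =>
    integrable_finset_sum _ fun j _ => l2_integrable_mul (hf i) (hf j)]
  exact Finset.sum_congr rfl fun i _ =>
    integral_finset_sum _ fun j _ => l2_integrable_mul (hf i) (hf j)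

end helpers

lemma aug_key {Ω : Type*} [MeasurableSpace Ω]
    (μ : Measure Ω) [IsProbabilityMeasure μ]
    {k p : ℕ} (hkp : k ≤ p)
    (W Z : Fin p → Ω → ℝ)
    (hW2 : ∀ j, MemLp (W j) 2 μ) (hZ2 : ∀ j, MemLp (Z j) 2 μ)
    (ψ : Fin p → Fin p → ℝ)
    (horth : ∀ r s, ∑ j, ψ r j * ψ s j = if r = s then (1 : ℝ) else 0)
    (lam : Fin p → ℝ) (hlamnn : ∀ r, 0 ≤ lam r)
    (hlampos : ∀ r : Fin p, (r : ℕ) < k → 0 < lam r)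
    (hWcov : ∀ r s, ∫ ω, (∑ j, ψ r j * W j ω) * (∑ j, ψ s j * W j ω) ∂μ
      = if r = s then (p : ℝ) * lam r else 0)
    (hWZ : ∀ j l, ∫ ω, W j ω * Z l ω ∂μ = 0)
    (hZZ : ∀ j l, j ≠ l → ∫ ω, Z j ω * Z l ω ∂μ = 0)
    (D₁ : ℝ) (hD₁ : 0 < D₁)
    (hZvar : ∀ j, D₁ ≤ ∫ ω, Z j ω ^ 2 ∂μ)
    (ξ : Fin k → Ω → ℝ)
    (hξ : ∀ r : Fin k, ξ r = fun ω =>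
      (∑ j, ψ (Fin.castLE hkp r) j * W j ω) / Real.sqrt ((p : ℝ) * lam (Fin.castLE hkp r)))
    (a : Fin k → ℝ) (b : Fin p → ℝ) :
    ∑ r : Fin k, (a r
        + Real.sqrt ((p : ℝ) * lam (Fin.castLE hkp r))
          * ∑ j, ψ (Fin.castLE hkp r) j * b j) ^ 2
      + D₁ * ∑ j, b j ^ 2
    ≤ ∫ ω, (∑ r, a r * ξ r ω + ∑ j, b j * (W j ω + Z j ω)) ^ 2 ∂μ := by
  classical
  set q : Fin k → ℝ := fun r => Real.sqrt ((p : ℝ) * lam (Fin.castLE hkp r)) with hqdef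
  have hq : ∀ r : Fin k, 0 < q r := by
    intro r
    have hp : (0 : ℝ) < p := by
      have := (Fin.castLE hkp r).pos
      exact_mod_cast this
    have hl : 0 < lam (Fin.castLE hkp r) := by
      apply hlampos
      simpa using r.isLt
    exact Real.sqrt_pos.mpr (mul_pos hp hl)
  have hqsq : ∀ r : Fin k, q r ^ 2 = (p : ℝ) * lam (Fin.castLE hkp r) := by
    intro r
    exact Real.sq_sqrt (mul_nonneg (Nat.cast_nonneg p) (hlamnn _))
  show ∑ r : Fin k, (a r + q r * ∑ j, ψ (Fin.castLE hkp r) j * b j) ^ 2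
      + D₁ * ∑ j, b j ^ 2
    ≤ ∫ ω, (∑ r, a r * ξ r ω + ∑ j, b j * (W j ω + Z j ω)) ^ 2 ∂μ
  set c : Fin p → ℝ := fun j => b j + ∑ r : Fin k, a r * ψ (Fin.castLE hkp r) j / q r with hcdef
  set d : Fin p → ℝ := fun r => ∑ j, ψ r j * c j with hddef
  set P : Fin p → Ω → ℝ := fun r ω => ∑ j, ψ r j * W j ω with hPdef
  -- column orthonormality
  have hcol : ∀ j l : Fin p, ∑ r : Fin p, ψ r j * ψ r l = if j = l then (1 : ℝ) else 0 := by
    intro j l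
    set M : Matrix (Fin p) (Fin p) ℝ := Matrix.of ψ with hMdef
    have hM : M * Mᵀ = 1 := by
      ext r s
      simpa [hMdef, Matrix.mul_apply, Matrix.one_apply] using horth r s
    have hM' : Mᵀ * M = 1 := mul_eq_one_comm.mp hM
    have := congrArg (fun A => A j l) hM'
    simpa [hMdef, Matrix.mul_apply, Matrix.one_apply] using this
  -- d expressed via c
  have hdψ : ∀ j : Fin p, ∑ r : Fin p, d r * ψ r j = c j := by
    intro j
    have h1 : ∑ r : Fin p, d r * ψ r j = ∑ l, c l * ∑ r : Fin p, ψ r l * ψ r j := by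
      simp only [hddef, Finset.sum_mul]
      rw [Finset.sum_comm]
      refine Finset.sum_congr rfl fun l _ => ?_
      rw [Finset.mul_sum]
      exact Finset.sum_congr rfl fun r _ => by ring
    rw [h1]
    simp [hcol, Finset.sum_ite_eq]
  -- pointwise identity
  have hpt : ∀ ω, ∑ r, a r * ξ r ω + ∑ j, b j * (W j ω + Z j ω)
      = ∑ r : Fin p, d r * P r ω + ∑ j, b j * Z j ω := by
    intro ω
    have h1 : ∑ r : Fin p, d r * P r ω = ∑ j, c j * W j ω := by
      simp only [hPdef, Finset.mul_sum]
      rw [Finset.sum_comm]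
      refine Finset.sum_congr rfl fun j _ => ?_
      rw [← hdψ j, Finset.sum_mul]
      exact Finset.sum_congr rfl fun r _ => by ring
    have h2 : ∑ r, a r * ξ r ω
        = ∑ j, (∑ r : Fin k, a r * ψ (Fin.castLE hkp r) j / q r) * W j ω := by
      have hL : ∀ r : Fin k, a r * ξ r ω
          = ∑ j, a r * ψ (Fin.castLE hkp r) j / q r * W j ω := by
        intro r
        rw [hξ r]
        simp only
        rw [mul_div_assoc', Finset.mul_sum, Finset.sum_div]
        exact Finset.sum_congr rfl fun j _ => by ring
      rw [Finset.sum_congr rfl fun r _ => hL r, Finset.sum_comm]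
      exact Finset.sum_congr rfl fun j _ => (Finset.sum_mul _ _ _).symm
    rw [h1, h2]
    simp only [hcdef, mul_add, add_mul, Finset.sum_add_distrib]
    ring
  -- L2 membership
  have hP2 : ∀ r : Fin p, MemLp (P r) 2 μ := by
    intro r
    have h : MemLp (fun ω => ∑ j, ψ r j * W j ω) 2 μ :=
      memLp_finset_sum _ fun j _ => (hW2 j).const_mul _
    exact h
  -- integral of P r * Z j
  have hPZ : ∀ r j, ∫ ω, P r ω * Z j ω ∂μ = 0 := by
    intro r j
    have h1 : ∀ ω, P r ω * Z j ω = ∑ l, ψ r l * (W l ω * Z j ω) := by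
      intro ω
      simp only [hPdef, Finset.sum_mul]
      exact Finset.sum_congr rfl fun l _ => by ring
    simp_rw [h1]
    rw [integral_finset_sum _ fun l _ =>
      (l2_integrable_mul (hW2 l) (hZ2 j)).const_mul _]
    simp [integral_const_mul, hWZ]
  -- main integral computation
  have hf2 : ∀ i : Fin p ⊕ Fin p,
      MemLp (Sum.elim (fun r ω => d r * P r ω) (fun j ω => b j * Z j ω) i) 2 μ := by
    rintro (r | j)
    · exact (hP2 r).const_mul _
    · exact (hZ2 j).const_mul _
  have hint : ∫ ω, (∑ r : Fin p, d r * P r ω + ∑ j, b j * Z j ω) ^ 2 ∂μ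
      = ∑ r : Fin p, d r ^ 2 * ((p : ℝ) * lam r) + ∑ j, b j ^ 2 * ∫ ω, Z j ω ^ 2 ∂μ := by
    have h0 : ∀ ω, ∑ r : Fin p, d r * P r ω + ∑ j, b j * Z j ω
        = ∑ i : Fin p ⊕ Fin p,
            Sum.elim (fun r ω => d r * P r ω) (fun j ω => b j * Z j ω) i ω := by
      intro ω; rw [Fintype.sum_sum_type]; simp
    simp_rw [h0]
    rw [integral_sq_sum _ hf2]
    rw [Fintype.sum_sum_type]
    have hPP : ∀ r s : Fin p, ∫ ω, P r ω * P s ω ∂μ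
        = if r = s then (p : ℝ) * lam r else 0 := by
      intro r s
      simp only [hPdef]
      exact hWcov r s
    congr 1
    · refine Finset.sum_congr rfl fun r _ => ?_
      rw [Fintype.sum_sum_type]
      simp only [Sum.elim_inl, Sum.elim_inr]
      have hA : ∑ s : Fin p, ∫ ω, (d r * P r ω) * (d s * P s ω) ∂μ
          = d r ^ 2 * ((p : ℝ) * lam r) := by
        have h1 : ∀ s : Fin p, ∫ ω, (d r * P r ω) * (d s * P s ω) ∂μ
            = if r = s then d r * d s * ((p : ℝ) * lam r) else 0 := by
          intro s
          have h2 : ∫ ω, (d r * P r ω) * (d s * P s ω) ∂μ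
              = d r * d s * ∫ ω, P r ω * P s ω ∂μ := by
            rw [← integral_const_mul]
            exact integral_congr_ae (Filter.Eventually.of_forall fun ω => by ring)
          rw [h2, hPP, mul_ite, mul_zero]
        simp_rw [h1]
        rw [Finset.sum_ite_eq (Finset.univ : Finset (Fin p)) r
          (fun s => d r * d s * ((p : ℝ) * lam r))]
        simp only [Finset.mem_univ, if_true]
        ring
      have hB : ∑ j : Fin p, ∫ ω, (d r * P r ω) * (b j * Z j ω) ∂μ = 0 := by
        refine Finset.sum_eq_zero fun j _ => ?_
        have : ∀ ω, (d r * P r ω) * (b j * Z j ω) = (d r * b j) * (P r ω * Z j ω) := by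
          intro ω; ring
        simp_rw [this]
        rw [integral_const_mul, hPZ, mul_zero]
      rw [hA, hB, add_zero]
    · refine Finset.sum_congr rfl fun j _ => ?_
      rw [Fintype.sum_sum_type]
      simp only [Sum.elim_inl, Sum.elim_inr]
      have hA : ∑ r : Fin p, ∫ ω, (b j * Z j ω) * (d r * P r ω) ∂μ = 0 := by
        refine Finset.sum_eq_zero fun r _ => ?_
        have : ∀ ω, (b j * Z j ω) * (d r * P r ω) = (d r * b j) * (P r ω * Z j ω) := by
          intro ω; ring
        simp_rw [this]
        rw [integral_const_mul, hPZ, mul_zero]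
      have hB : ∑ l : Fin p, ∫ ω, (b j * Z j ω) * (b l * Z l ω) ∂μ
          = b j ^ 2 * ∫ ω, Z j ω ^ 2 ∂μ := by
        have : ∀ l : Fin p, ∫ ω, (b j * Z j ω) * (b l * Z l ω) ∂μ
            = (b j * b l) * ∫ ω, Z j ω * Z l ω ∂μ := by
          intro l
          rw [← integral_const_mul]
          exact integral_congr_ae (Filter.Eventually.of_forall fun ω => by ring)
        simp_rw [this]
        rw [Finset.sum_eq_single j]
        · rw [show (∫ ω, Z j ω * Z j ω ∂μ) = ∫ ω, Z j ω ^ 2 ∂μ from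
            integral_congr_ae (Filter.Eventually.of_forall fun ω => (pow_two _).symm)]
          ring
        · intro l _ hl
          rw [hZZ j l (Ne.symm hl), mul_zero]
        · intro h; exact absurd (Finset.mem_univ j) h
      rw [hA, hB, zero_add]
  -- lower bounds
  have hterm : ∀ r : Fin k,
      (a r + q r * ∑ j, ψ (Fin.castLE hkp r) j * b j) ^ 2
        = d (Fin.castLE hkp r) ^ 2 * ((p : ℝ) * lam (Fin.castLE hkp r)) := by
    intro r
    have hd : d (Fin.castLE hkp r)
        = (∑ j, ψ (Fin.castLE hkp r) j * b j) + a r / q r := by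
      simp only [hddef, hcdef, mul_add, Finset.sum_add_distrib]
      congr 1
      have h1 : ∀ j, ψ (Fin.castLE hkp r) j * ∑ s : Fin k, a s * ψ (Fin.castLE hkp s) j / q s
          = ∑ s : Fin k, (a s / q s) * (ψ (Fin.castLE hkp r) j * ψ (Fin.castLE hkp s) j) := by
        intro j
        rw [Finset.mul_sum]
        exact Finset.sum_congr rfl fun s _ => by ring
      simp_rw [h1]
      rw [Finset.sum_comm]
      have h2 : ∀ s : Fin k,
          ∑ j, (a s / q s) * (ψ (Fin.castLE hkp r) j * ψ (Fin.castLE hkp s) j)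
            = (a s / q s) * (if r = s then (1 : ℝ) else 0) := by
        intro s
        rw [← Finset.mul_sum, horth]
        congr 1
        simp [Fin.castLE_inj]
      simp_rw [h2]
      simp [Finset.sum_ite_eq]
    have hqd : q r * d (Fin.castLE hkp r)
        = a r + q r * ∑ j, ψ (Fin.castLE hkp r) j * b j := by
      rw [hd, mul_add, mul_div_cancel₀ _ (ne_of_gt (hq r))]
      ring
    calc (a r + q r * ∑ j, ψ (Fin.castLE hkp r) j * b j) ^ 2
        = (q r * d (Fin.castLE hkp r)) ^ 2 := by rw [hqd]
      _ = d (Fin.castLE hkp r) ^ 2 * q r ^ 2 := by ring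
      _ = _ := by rw [hqsq r]
  have hineq1 : ∑ r : Fin k, (a r + q r * ∑ j, ψ (Fin.castLE hkp r) j * b j) ^ 2
      ≤ ∑ r : Fin p, d r ^ 2 * ((p : ℝ) * lam r) := by
    have hinj : ∀ x ∈ (Finset.univ : Finset (Fin k)), ∀ y ∈ Finset.univ,
        Fin.castLE hkp x = Fin.castLE hkp y → x = y :=
      fun x _ y _ h => Fin.castLE_inj.mp h
    have himg : ∑ r : Fin k, d (Fin.castLE hkp r) ^ 2 * ((p : ℝ) * lam (Fin.castLE hkp r))
        = ∑ r ∈ Finset.univ.image (Fin.castLE hkp), d r ^ 2 * ((p : ℝ) * lam r) :=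
      (Finset.sum_image (f := fun r => d r ^ 2 * ((p : ℝ) * lam r)) hinj).symm
    rw [Finset.sum_congr rfl fun r _ => hterm r, himg]
    refine Finset.sum_le_sum_of_subset_of_nonneg (Finset.subset_univ _) fun r _ _ => ?_
    exact mul_nonneg (sq_nonneg _) (mul_nonneg (Nat.cast_nonneg p) (hlamnn r))
  have hineq2 : D₁ * ∑ j, b j ^ 2 ≤ ∑ j, b j ^ 2 * ∫ ω, Z j ω ^ 2 ∂μ := by
    rw [Finset.mul_sum]
    refine Finset.sum_le_sum fun j _ => ?_
    rw [mul_comm]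
    exact mul_le_mul_of_nonneg_left (hZvar j) (sq_nonneg _)
  calc ∑ r : Fin k, (a r + q r * ∑ j, ψ (Fin.castLE hkp r) j * b j) ^ 2 + D₁ * ∑ j, b j ^ 2
      ≤ ∑ r : Fin p, d r ^ 2 * ((p : ℝ) * lam r) + ∑ j, b j ^ 2 * ∫ ω, Z j ω ^ 2 ∂μ :=
        add_le_add hineq1 hineq2
    _ = ∫ ω, (∑ r : Fin p, d r * P r ω + ∑ j, b j * Z j ω) ^ 2 ∂μ := hint.symm
    _ = _ := integral_congr_ae (Filter.Eventually.of_forall fun ω => by rw [hpt ω])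


/-- Identifiability of the augmented model: for the model
`Y = Σ_r α_r ξ_r + Σ_j β_j X_j + ε` with `X = W + Z`, standardized factors
`ξ_r = ψ_rᵀW/√(pλ_r)`, and the stated uncorrelatedness assumptions, any alternative
coefficients `(α*, β*)` satisfy
`E([Σ_r (α_r−α*_r)ξ_r + Σ_j (β_j−β*_j)X_j]²)
  ≥ Σ_r (α_r−α*_r+√(pλ_r)ψ_rᵀ(β−β*))² + D₁‖β−β*‖₂²`;
in particular the coefficients of the augmented model are unique. -/
theorem augmented_model_identifiability {Ω : Type*} [MeasurableSpace Ω]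
    (μ : Measure Ω) [IsProbabilityMeasure μ]
    {k p : ℕ} (hkp : k ≤ p)
    (W Z : Fin p → Ω → ℝ)
    (hWm : ∀ j, Measurable (W j)) (hZm : ∀ j, Measurable (Z j))
    (hW2 : ∀ j, MemLp (W j) 2 μ) (hZ2 : ∀ j, MemLp (Z j) 2 μ)
    (ψ : Fin p → Fin p → ℝ)
    (horth : ∀ r s, ∑ j, ψ r j * ψ s j = if r = s then (1 : ℝ) else 0)
    (lam : Fin p → ℝ) (hlamnn : ∀ r, 0 ≤ lam r)
    (hlampos : ∀ r : Fin p, (r : ℕ) < k → 0 < lam r)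
    (hWcov : ∀ r s, ∫ ω, (∑ j, ψ r j * W j ω) * (∑ j, ψ s j * W j ω) ∂μ
      = if r = s then (p : ℝ) * lam r else 0)
    (hWZ : ∀ j l, ∫ ω, W j ω * Z l ω ∂μ = 0)
    (hZZ : ∀ j l, j ≠ l → ∫ ω, Z j ω * Z l ω ∂μ = 0)
    (D₁ : ℝ) (hD₁ : 0 < D₁)
    (hZvar : ∀ j, D₁ ≤ ∫ ω, Z j ω ^ 2 ∂μ)
    (ξ : Fin k → Ω → ℝ)
    (hξ : ∀ r : Fin k, ξ r = fun ω =>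
      (∑ j, ψ (Fin.castLE hkp r) j * W j ω) / Real.sqrt ((p : ℝ) * lam (Fin.castLE hkp r)))
    (α αs : Fin k → ℝ) (β βs : Fin p → ℝ) :
    (∑ r : Fin k, ((α r - αs r)
        + Real.sqrt ((p : ℝ) * lam (Fin.castLE hkp r))
          * ∑ j, ψ (Fin.castLE hkp r) j * (β j - βs j)) ^ 2
      + D₁ * ∑ j, (β j - βs j) ^ 2
    ≤ ∫ ω, (∑ r, (α r - αs r) * ξ r ω
        + ∑ j, (β j - βs j) * (W j ω + Z j ω)) ^ 2 ∂μ) ∧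
    ((∀ᵐ ω ∂μ, ∑ r, α r * ξ r ω + ∑ j, β j * (W j ω + Z j ω)
        = ∑ r, αs r * ξ r ω + ∑ j, βs j * (W j ω + Z j ω)) → α = αs ∧ β = βs) := by
  have key := aug_key μ hkp W Z hW2 hZ2 ψ horth lam hlamnn hlampos hWcov hWZ hZZ
    D₁ hD₁ hZvar ξ hξ (fun r => α r - αs r) (fun j => β j - βs j)
  refine ⟨key, ?_⟩
  intro heq
  have hI : ∫ ω, (∑ r, (α r - αs r) * ξ r ω
      + ∑ j, (β j - βs j) * (W j ω + Z j ω)) ^ 2 ∂μ = 0 := by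
    rw [show (0 : ℝ) = ∫ (_ : Ω), (0 : ℝ) ∂μ by simp]
    refine integral_congr_ae ?_
    filter_upwards [heq] with ω hω
    have h1 : ∑ r, (α r - αs r) * ξ r ω + ∑ j, (β j - βs j) * (W j ω + Z j ω)
        = (∑ r, α r * ξ r ω + ∑ j, β j * (W j ω + Z j ω))
          - (∑ r, αs r * ξ r ω + ∑ j, βs j * (W j ω + Z j ω)) := by
      simp only [sub_mul, Finset.sum_sub_distrib]
      ring
    rw [h1, hω, sub_self]
    simp
  rw [hI] at key
  have hT : (0 : ℝ) ≤ ∑ j, (β j - βs j) ^ 2 :=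
    Finset.sum_nonneg fun j _ => sq_nonneg _
  have hS : (0 : ℝ) ≤ ∑ r : Fin k, ((α r - αs r)
      + Real.sqrt ((p : ℝ) * lam (Fin.castLE hkp r))
        * ∑ j, ψ (Fin.castLE hkp r) j * (β j - βs j)) ^ 2 :=
    Finset.sum_nonneg fun r _ => sq_nonneg _
  have hT0 : ∑ j, (β j - βs j) ^ 2 = 0 := by nlinarith
  have hb : ∀ j, β j - βs j = 0 := by
    intro j
    have h := (Finset.sum_eq_zero_iff_of_nonneg
      (fun j _ => sq_nonneg (β j - βs j))).mp hT0 j (Finset.mem_univ j)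
    exact pow_eq_zero_iff two_ne_zero |>.mp h
  have hβ : β = βs := funext fun j => sub_eq_zero.mp (hb j)
  have hS0 : ∑ r : Fin k, ((α r - αs r)
      + Real.sqrt ((p : ℝ) * lam (Fin.castLE hkp r))
        * ∑ j, ψ (Fin.castLE hkp r) j * (β j - βs j)) ^ 2 ≤ 0 := by nlinarith
  have hSsimp : ∀ r : Fin k, ((α r - αs r)
      + Real.sqrt ((p : ℝ) * lam (Fin.castLE hkp r))
        * ∑ j, ψ (Fin.castLE hkp r) j * (β j - βs j)) = α r - αs r := by
    intro r
    rw [Finset.sum_eq_zero fun j _ => by rw [hb j, mul_zero], mul_zero, add_zero]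
  rw [Finset.sum_congr rfl (fun r _ => by rw [hSsimp r])] at hS0
  have hS0' : ∑ r : Fin k, (α r - αs r) ^ 2 = 0 :=
    le_antisymm hS0 (Finset.sum_nonneg fun r _ => sq_nonneg _)
  have ha : ∀ r, α r - αs r = 0 := by
    intro r
    have h := (Finset.sum_eq_zero_iff_of_nonneg
      (fun r _ => sq_nonneg (α r - αs r))).mp hS0' r (Finset.mem_univ r)
    exact pow_eq_zero_iff two_ne_zero |>.mp h
  exact ⟨funext fun r => sub_eq_zero.mp (ha r), hβ⟩
end

section
/- Let A and B be symmetric p×p matrices, let λ₁(A) > λ₂(A) > ... be the eigenvalues of A with unit eigenvectors ψ_r(A), and let g_r = min_{j≠r} |λ_j(A) − λ_r(A)| > 0 be the eigengap at r. If ψ_r(A+B) denotes a suitably signed unit eigenvector of A+B for its r-th eigenvalue, then ‖ψ_r(A+B) − ψ_r(A)‖₂ ≤ ‖B‖/g_r + 6‖B‖²/g_r², where ‖B‖ is the spectral norm. -/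
open Matrix Finset Module

/-- The `r`-th largest eigenvalue (counted with multiplicity) of a Hermitian real matrix. -/
noncomputable def sortedEig {p : ℕ} {A : Matrix (Fin p) (Fin p) ℝ} (hA : A.IsHermitian) :
    Fin p → ℝ :=
  fun i => hA.eigenvalues (Tuple.sort hA.eigenvalues (Fin.rev i))


variable {p : ℕ}



local notation "E" p => EuclideanSpace ℝ (Fin p)

noncomputable def toE (x : Fin p → ℝ) : EuclideanSpace ℝ (Fin p) :=
  (WithLp.equiv 2 (Fin p → ℝ)).symm x

lemma toE_apply (x : Fin p → ℝ) (i : Fin p) : toE x i = x i := rfl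

lemma toE_sub (x y : Fin p → ℝ) : toE (x - y) = toE x - toE y := rfl

lemma clm_toE (M : Matrix (Fin p) (Fin p) ℝ) (x : Fin p → ℝ) :
    (Matrix.toEuclideanCLM (𝕜 := ℝ) M) (toE x) = toE (M.mulVec x) := by
  rw [toE]
  rfl

lemma norm_toE_sq (x : Fin p → ℝ) : ‖toE x‖ ^ 2 = ∑ i, x i ^ 2 := by
  rw [EuclideanSpace.norm_eq, Real.sq_sqrt (by positivity)]
  simp [toE_apply, Real.norm_eq_abs, sq_abs]

lemma inner_toE (x y : Fin p → ℝ) : (inner ℝ (toE x) (toE y) : ℝ) = ∑ i, x i * y i := by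
  simp [PiLp.inner_apply, toE_apply, RCLike.inner_apply, mul_comm]

-- symmetric operator property
lemma inner_clm_left (M : Matrix (Fin p) (Fin p) ℝ) (hM : M.IsHermitian)
    (x y : EuclideanSpace ℝ (Fin p)) :
    (inner ℝ ((Matrix.toEuclideanCLM (𝕜 := ℝ) M) x) y : ℝ)
      = inner ℝ x ((Matrix.toEuclideanCLM (𝕜 := ℝ) M) y) := by
  have hsymm := (Matrix.isHermitian_iff_isSymmetric).mp hM
  have h1 : ∀ z, (Matrix.toEuclideanCLM (𝕜 := ℝ) M) z = Matrix.toEuclideanLin M z := by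
    intro z
    rw [← Matrix.coe_toEuclideanCLM_eq_toEuclideanLin]
    rfl
  rw [h1, h1]
  exact hsymm x y

lemma clm_eigenvectorBasis {M : Matrix (Fin p) (Fin p) ℝ} (hM : M.IsHermitian) (i : Fin p) :
    (Matrix.toEuclideanCLM (𝕜 := ℝ) M) (hM.eigenvectorBasis i)
      = hM.eigenvalues i • hM.eigenvectorBasis i := by
  have h := hM.mulVec_eigenvectorBasis i
  calc (Matrix.toEuclideanCLM (𝕜 := ℝ) M) (hM.eigenvectorBasis i)
      = toE (M.mulVec ((WithLp.equiv 2 (Fin p → ℝ)) (hM.eigenvectorBasis i))) := clm_toE M _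
    _ = toE (hM.eigenvalues i • (WithLp.equiv 2 (Fin p → ℝ)) (hM.eigenvectorBasis i)) := congrArg toE h
    _ = hM.eigenvalues i • hM.eigenvectorBasis i := rfl

lemma repr_clm {M : Matrix (Fin p) (Fin p) ℝ} (hM : M.IsHermitian)
    (x : EuclideanSpace ℝ (Fin p)) (i : Fin p) :
    hM.eigenvectorBasis.repr ((Matrix.toEuclideanCLM (𝕜 := ℝ) M) x) i
      = hM.eigenvalues i * hM.eigenvectorBasis.repr x i := by
  rw [OrthonormalBasis.repr_apply_apply, OrthonormalBasis.repr_apply_apply,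
    ← inner_clm_left M hM, clm_eigenvectorBasis hM i, real_inner_smul_left]


lemma inner_eq_sum_repr (b : OrthonormalBasis (Fin p) ℝ (EuclideanSpace ℝ (Fin p)))
    (x y : EuclideanSpace ℝ (Fin p)) :
    (inner ℝ x y : ℝ) = ∑ i, b.repr x i * b.repr y i := by
  rw [← LinearIsometryEquiv.inner_map_map b.repr x y, PiLp.inner_apply]
  simp [RCLike.inner_apply, mul_comm]

lemma norm_sq_eq_sum_repr (b : OrthonormalBasis (Fin p) ℝ (EuclideanSpace ℝ (Fin p)))
    (x : EuclideanSpace ℝ (Fin p)) : ‖x‖ ^ 2 = ∑ i, b.repr x i ^ 2 := by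
  rw [← real_inner_self_eq_norm_sq, inner_eq_sum_repr b]
  simp [sq]

lemma repr_eq_zero_of_mem_span (b : OrthonormalBasis (Fin p) ℝ (EuclideanSpace ℝ (Fin p)))
    (s : Set (Fin p)) (x : EuclideanSpace ℝ (Fin p))
    (hx : x ∈ Submodule.span ℝ (Set.range (fun j : s => b j)))
    (i : Fin p) (hi : i ∉ s) : b.repr x i = 0 := by
  induction hx using Submodule.span_induction with
  | mem y hy =>
    obtain ⟨j, rfl⟩ := hy
    rw [OrthonormalBasis.repr_self]
    have : i ≠ (j : Fin p) := fun h => hi (h ▸ j.2)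
    simp [EuclideanSpace.single_apply, this]
  | zero => simp
  | add y z _ _ hy hz => rw [map_add]; simp [hy, hz]
  | smul a y _ hy => rw [_root_.map_smul]; simp [hy]


lemma rayleigh_ge {M : Matrix (Fin p) (Fin p) ℝ} (hM : M.IsHermitian)
    (x : EuclideanSpace ℝ (Fin p)) (t : ℝ)
    (h : ∀ i, hM.eigenvectorBasis.repr x i ≠ 0 → t ≤ hM.eigenvalues i) :
    t * ‖x‖ ^ 2 ≤ inner ℝ x ((Matrix.toEuclideanCLM (𝕜 := ℝ) M) x) := by
  rw [inner_eq_sum_repr hM.eigenvectorBasis, norm_sq_eq_sum_repr hM.eigenvectorBasis, mul_sum]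
  refine Finset.sum_le_sum fun i _ => ?_
  rw [repr_clm hM]
  by_cases hz : hM.eigenvectorBasis.repr x i = 0
  · simp [hz]
  · have := h i hz
    nlinarith [sq_nonneg (hM.eigenvectorBasis.repr x i)]

lemma rayleigh_le {M : Matrix (Fin p) (Fin p) ℝ} (hM : M.IsHermitian)
    (x : EuclideanSpace ℝ (Fin p)) (t : ℝ)
    (h : ∀ i, hM.eigenvectorBasis.repr x i ≠ 0 → hM.eigenvalues i ≤ t) :
    (inner ℝ x ((Matrix.toEuclideanCLM (𝕜 := ℝ) M) x) : ℝ) ≤ t * ‖x‖ ^ 2 := by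
  rw [inner_eq_sum_repr hM.eigenvectorBasis, norm_sq_eq_sum_repr hM.eigenvectorBasis, mul_sum]
  refine Finset.sum_le_sum fun i _ => ?_
  rw [repr_clm hM]
  by_cases hz : hM.eigenvectorBasis.repr x i = 0
  · simp [hz]
  · have := h i hz
    nlinarith [sq_nonneg (hM.eigenvectorBasis.repr x i)]

lemma weyl_one_sided (A B : Matrix (Fin p) (Fin p) ℝ) (hA : A.IsHermitian)
    (hAB : (A + B).IsHermitian) (r : Fin p) :
    sortedEig hAB r ≤ sortedEig hA r + ‖Matrix.toEuclideanCLM (𝕜 := ℝ) B‖ := by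
  classical
  set ε := ‖Matrix.toEuclideanCLM (𝕜 := ℝ) B‖ with hεdef
  set μ := sortedEig hAB r with hμdef
  set lam := sortedEig hA r with hlamdef
  set s1 : Set (Fin p) := {i | μ ≤ hAB.eigenvalues i} with hs1
  set s2 : Set (Fin p) := {i | hA.eigenvalues i ≤ lam} with hs2
  set S : Submodule ℝ (EuclideanSpace ℝ (Fin p)) :=
    Submodule.span ℝ (Set.range (fun j : s1 => hAB.eigenvectorBasis j)) with hSdef
  set T : Submodule ℝ (EuclideanSpace ℝ (Fin p)) :=
    Submodule.span ℝ (Set.range (fun j : s2 => hA.eigenvectorBasis j)) with hTdef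
  have hS : finrank ℝ S = Fintype.card s1 :=
    finrank_span_eq_card
      ((hAB.eigenvectorBasis.orthonormal.linearIndependent).comp _ Subtype.val_injective)
  have hT : finrank ℝ T = Fintype.card s2 :=
    finrank_span_eq_card
      ((hA.eigenvectorBasis.orthonormal.linearIndependent).comp _ Subtype.val_injective)
  have hrp : r.val < p := r.2
  have hcard1 : r.val + 1 ≤ finrank ℝ S := by
    have hmap : ∀ k : Fin (r.val + 1),
        Tuple.sort hAB.eigenvalues (Fin.rev ⟨k.1, lt_of_le_of_lt (Nat.lt_succ_iff.mp k.2) hrp⟩)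
          ∈ s1 := by
      intro k
      have hkr : (⟨k.1, lt_of_le_of_lt (Nat.lt_succ_iff.mp k.2) hrp⟩ : Fin p) ≤ r :=
        Nat.lt_succ_iff.mp k.2
      have := Tuple.monotone_sort hAB.eigenvalues (Fin.rev_le_rev.mpr hkr)
      exact this
    have hinj : Function.Injective
        (fun k : Fin (r.val + 1) =>
          (⟨Tuple.sort hAB.eigenvalues
            (Fin.rev ⟨k.1, lt_of_le_of_lt (Nat.lt_succ_iff.mp k.2) hrp⟩), hmap k⟩ : s1)) := by
      intro a b hab
      have h1 := congrArg (fun z : s1 => (z : Fin p)) hab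
      simp only at h1
      have h2 := (Tuple.sort hAB.eigenvalues).injective h1
      have h3 := Fin.rev_injective h2
      injection h3 with h4
      exact Fin.ext h4
    calc r.val + 1 = Fintype.card (Fin (r.val + 1)) := (Fintype.card_fin _).symm
      _ ≤ finrank ℝ S := by rw [hS]; exact Fintype.card_le_of_injective _ hinj
  have hcard2 : p - r.val ≤ finrank ℝ T := by
    have hmap : ∀ k : Fin (p - r.val),
        Tuple.sort hA.eigenvalues ⟨k.1, lt_of_lt_of_le k.2 (Nat.sub_le _ _)⟩ ∈ s2 := by
      intro k
      have hkr : (⟨k.1, lt_of_lt_of_le k.2 (Nat.sub_le _ _)⟩ : Fin p) ≤ Fin.rev r := by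
        rw [Fin.le_def, Fin.val_rev]
        have hk2 := k.2
        show (k : ℕ) ≤ p - ((r : ℕ) + 1)
        omega
      have := Tuple.monotone_sort hA.eigenvalues hkr
      exact this
    have hinj : Function.Injective
        (fun k : Fin (p - r.val) =>
          (⟨Tuple.sort hA.eigenvalues ⟨k.1, lt_of_lt_of_le k.2 (Nat.sub_le _ _)⟩, hmap k⟩ : s2)) := by
      intro a b hab
      have h1 := congrArg (fun z : s2 => (z : Fin p)) hab
      simp only at h1
      have h2 := (Tuple.sort hA.eigenvalues).injective h1
      injection h2 with h4
      exact Fin.ext h4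
    calc p - r.val = Fintype.card (Fin (p - r.val)) := (Fintype.card_fin _).symm
      _ ≤ finrank ℝ T := by rw [hT]; exact Fintype.card_le_of_injective _ hinj
  have hfin : 0 < finrank ℝ ↥(S ⊓ T) := by
    have h1 := Submodule.finrank_sup_add_finrank_inf_eq S T
    have h2 : finrank ℝ ↥(S ⊔ T) ≤ p := by
      have := Submodule.finrank_le (S ⊔ T)
      rwa [finrank_euclideanSpace_fin] at this
    omega
  have : Nontrivial ↥(S ⊓ T) := finrank_pos_iff.mp hfin
  obtain ⟨x, hx0⟩ := exists_ne (0 : ↥(S ⊓ T))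
  have hxS : (x : EuclideanSpace ℝ (Fin p)) ∈ S := x.2.1
  have hxT : (x : EuclideanSpace ℝ (Fin p)) ∈ T := x.2.2
  have hxne : (x : EuclideanSpace ℝ (Fin p)) ≠ 0 := fun h => hx0 (Subtype.ext h)
  have hxnorm : (0:ℝ) < ‖(x : EuclideanSpace ℝ (Fin p))‖ ^ 2 :=
    pow_pos (norm_pos_iff.mpr hxne) 2
  have h1 : μ * ‖(x : EuclideanSpace ℝ (Fin p))‖ ^ 2
      ≤ inner ℝ (x : EuclideanSpace ℝ (Fin p))
          ((Matrix.toEuclideanCLM (𝕜 := ℝ) (A + B)) (x : EuclideanSpace ℝ (Fin p))) := by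
    refine rayleigh_ge hAB _ μ fun i hi => ?_
    by_contra hc
    exact hi (repr_eq_zero_of_mem_span _ s1 _ hxS i hc)
  have h2 : (inner ℝ (x : EuclideanSpace ℝ (Fin p))
      ((Matrix.toEuclideanCLM (𝕜 := ℝ) A) (x : EuclideanSpace ℝ (Fin p))) : ℝ)
        ≤ lam * ‖(x : EuclideanSpace ℝ (Fin p))‖ ^ 2 := by
    refine rayleigh_le hA _ lam fun i hi => ?_
    by_contra hc
    exact hi (repr_eq_zero_of_mem_span _ s2 _ hxT i (fun hmem => hc hmem))
  have h3 : (inner ℝ (x : EuclideanSpace ℝ (Fin p))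
      ((Matrix.toEuclideanCLM (𝕜 := ℝ) B) (x : EuclideanSpace ℝ (Fin p))) : ℝ)
        ≤ ε * ‖(x : EuclideanSpace ℝ (Fin p))‖ ^ 2 := by
    calc (inner ℝ (x : EuclideanSpace ℝ (Fin p))
        ((Matrix.toEuclideanCLM (𝕜 := ℝ) B) (x : EuclideanSpace ℝ (Fin p))) : ℝ)
        ≤ ‖(x : EuclideanSpace ℝ (Fin p))‖
          * ‖(Matrix.toEuclideanCLM (𝕜 := ℝ) B) (x : EuclideanSpace ℝ (Fin p))‖ :=
          real_inner_le_norm _ _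
      _ ≤ ‖(x : EuclideanSpace ℝ (Fin p))‖
          * (ε * ‖(x : EuclideanSpace ℝ (Fin p))‖) := by
          gcongr
          exact (Matrix.toEuclideanCLM (𝕜 := ℝ) B).le_opNorm _
      _ = ε * ‖(x : EuclideanSpace ℝ (Fin p))‖ ^ 2 := by ring
  have h4 : (Matrix.toEuclideanCLM (𝕜 := ℝ) (A + B)) (x : EuclideanSpace ℝ (Fin p))
      = (Matrix.toEuclideanCLM (𝕜 := ℝ) A) (x : EuclideanSpace ℝ (Fin p))
        + (Matrix.toEuclideanCLM (𝕜 := ℝ) B) (x : EuclideanSpace ℝ (Fin p)) := by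
    rw [map_add]
    rfl
  rw [h4, inner_add_right] at h1
  have h5 : μ * ‖(x : EuclideanSpace ℝ (Fin p))‖ ^ 2
      ≤ (lam + ε) * ‖(x : EuclideanSpace ℝ (Fin p))‖ ^ 2 := by
    calc μ * ‖(x : EuclideanSpace ℝ (Fin p))‖ ^ 2 ≤ _ := h1
      _ ≤ (lam + ε) * ‖(x : EuclideanSpace ℝ (Fin p))‖ ^ 2 := by
        rw [add_mul]; exact add_le_add h2 h3
  exact le_of_mul_le_mul_right (by simpa [mul_comm] using h5) hxnorm

lemma sortedEig_congr {A A' : Matrix (Fin p) (Fin p) ℝ} (h : A = A')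
    (hA : A.IsHermitian) (hA' : A'.IsHermitian) : sortedEig hA = sortedEig hA' := by
  subst h; rfl


lemma final_arith {g ε t d : ℝ} (hg : 0 < g) (hε : 0 ≤ ε) (ht0 : 0 ≤ t)
    (ht1 : t ^ 2 ≤ 1) (hwε : (g - ε) * t ≤ ε) (hcase : 2 * ε < g)
    (hd0 : 0 ≤ d) (hd : d ^ 2 ≤ t ^ 2 + t ^ 4) :
    d ≤ ε / g + 6 * ε ^ 2 / g ^ 2 := by
  have ht1' : t ≤ 1 := by nlinarith
  have hS0 : (0:ℝ) ≤ t + t ^ 3 / 2 := by positivity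
  have hdle : d ≤ t + t ^ 3 / 2 := by
    rw [← Real.sqrt_sq hd0, ← Real.sqrt_sq hS0]
    apply Real.sqrt_le_sqrt
    nlinarith [sq_nonneg (t ^ 3)]
  refine hdle.trans ?_
  have hA1 : g * t ≤ 2 * ε := by
    nlinarith [mul_le_mul_of_nonneg_left ht1' hε]
  have hA2 : g ^ 2 * t ≤ g * ε + 2 * ε ^ 2 := by
    nlinarith [mul_le_mul_of_nonneg_left hwε hg.le, mul_le_mul_of_nonneg_left hA1 hε]
  have hA3 : g ^ 2 * t ^ 3 ≤ 4 * ε ^ 2 := by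
    have h1 : (g * t) ^ 2 ≤ (2 * ε) ^ 2 := by
      nlinarith [mul_nonneg hg.le ht0]
    nlinarith [mul_nonneg (sub_nonneg.2 h1) ht0, mul_nonneg (sq_nonneg ε) (sub_nonneg.2 ht1')]
  have heq : ε / g + 6 * ε ^ 2 / g ^ 2 = (g * ε + 6 * ε ^ 2) / g ^ 2 := by
    field_simp
  rw [heq, le_div_iff₀ (by positivity)]
  nlinarith [sq_nonneg ε]

set_option maxHeartbeats 2000000 in
/-- Eigenvector perturbation bound (Lemma A.1 of Kneip–Utikal): if `g > 0` lower-bounds the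
eigengap of `A` at `r`, and `u`, `v` are unit eigenvectors of `A` and `A+B` for their `r`-th
largest eigenvalues with `uᵀv ≥ 0`, then `‖v − u‖₂ ≤ ‖B‖/g + 6‖B‖²/g²`. -/
theorem eigenvector_perturbation {p : ℕ} (A B : Matrix (Fin p) (Fin p) ℝ)
    (hA : A.IsHermitian) (hB : B.IsHermitian) (hAB : (A + B).IsHermitian)
    (r : Fin p) (g : ℝ) (hg : 0 < g)
    (hgap : ∀ j, j ≠ r → g ≤ |sortedEig hA j - sortedEig hA r|)
    (u v : Fin p → ℝ)
    (hu : A.mulVec u = sortedEig hA r • u) (hunorm : ∑ j, u j ^ 2 = 1)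
    (hv : (A + B).mulVec v = sortedEig hAB r • v) (hvnorm : ∑ j, v j ^ 2 = 1)
    (hsign : 0 ≤ ∑ j, u j * v j) :
    Real.sqrt (∑ j, (v j - u j) ^ 2)
      ≤ ‖Matrix.toEuclideanCLM (𝕜 := ℝ) B‖ / g
        + 6 * ‖Matrix.toEuclideanCLM (𝕜 := ℝ) B‖ ^ 2 / g ^ 2 := by
  classical
  set ε := ‖Matrix.toEuclideanCLM (𝕜 := ℝ) B‖ with hεdef
  have hε0 : 0 ≤ ε := norm_nonneg _
  set lam := sortedEig hA r with hlamdef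
  set mu := sortedEig hAB r with hmudef
  set u' : EuclideanSpace ℝ (Fin p) := toE u with hu'def
  set v' : EuclideanSpace ℝ (Fin p) := toE v with hv'def
  have hun2 : ‖u'‖ ^ 2 = 1 := by rw [hu'def, norm_toE_sq]; exact hunorm
  have hvn2 : ‖v'‖ ^ 2 = 1 := by rw [hv'def, norm_toE_sq]; exact hvnorm
  have hun : ‖u'‖ = 1 := by
    rw [← Real.sqrt_sq (norm_nonneg u'), hun2, Real.sqrt_one]
  have hvn : ‖v'‖ = 1 := by
    rw [← Real.sqrt_sq (norm_nonneg v'), hvn2, Real.sqrt_one]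
  have hgoal : Real.sqrt (∑ j, (v j - u j) ^ 2) = ‖v' - u'‖ := by
    have h1 : ‖toE (v - u)‖ ^ 2 = ∑ j, (v j - u j) ^ 2 := by
      rw [norm_toE_sq]; simp [Pi.sub_apply]
    calc Real.sqrt (∑ j, (v j - u j) ^ 2) = Real.sqrt (‖toE (v - u)‖ ^ 2) := by rw [h1]
      _ = ‖toE (v - u)‖ := Real.sqrt_sq (norm_nonneg _)
      _ = ‖v' - u'‖ := by rw [toE_sub]
  rw [hgoal]
  have hu2 : (Matrix.toEuclideanCLM (𝕜 := ℝ) A) u' = lam • u' := by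
    rw [hu'def, clm_toE, hu]; rfl
  have hv2 : (Matrix.toEuclideanCLM (𝕜 := ℝ) (A + B)) v' = mu • v' := by
    rw [hv'def, clm_toE, hv]; rfl
  set c : ℝ := inner ℝ u' v' with hcdef
  have hc0 : 0 ≤ c := by rw [hcdef, hu'def, hv'def, inner_toE]; exact hsign
  have hc1 : c ≤ 1 := by
    calc c ≤ ‖u'‖ * ‖v'‖ := real_inner_le_norm _ _
      _ = 1 := by rw [hun, hvn, one_mul]
  set w : EuclideanSpace ℝ (Fin p) := v' - c • u' with hwdef
  have hcw : (inner ℝ u' w : ℝ) = 0 := by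
    rw [hwdef, inner_sub_right, real_inner_smul_right, real_inner_self_eq_norm_sq, hun, ← hcdef]
    ring
  have hwn : ‖w‖ ^ 2 = 1 - c ^ 2 := by
    have h1 : (inner ℝ v' u' : ℝ) = c := by rw [real_inner_comm, ← hcdef]
    rw [hwdef, norm_sub_sq_real, real_inner_smul_right, h1, norm_smul, hun, hvn]
    simp [Real.norm_eq_abs, mul_pow, sq_abs]
    ring
  -- Weyl
  have hW1 : mu ≤ lam + ε := weyl_one_sided A B hA hAB r
  have hW2 : lam ≤ mu + ε := by
    have hAeq : (A + B) + (-B) = A := by abel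
    have h' : ((A + B) + (-B)).IsHermitian := by rw [hAeq]; exact hA
    have h2 := weyl_one_sided (A + B) (-B) hAB h' r
    rw [sortedEig_congr hAeq h' hA] at h2
    have h3 : Matrix.toEuclideanCLM (𝕜 := ℝ) (-B) = -(Matrix.toEuclideanCLM (𝕜 := ℝ) B) :=
      map_neg _ _
    rw [h3, norm_neg] at h2
    exact h2
  have hWeyl : |mu - lam| ≤ ε := abs_sub_le_iff.mpr ⟨by linarith, by linarith⟩
  by_cases hcase : g ≤ 2 * ε
  · have h2 : ‖v' - u'‖ ≤ 2 := by
      calc ‖v' - u'‖ ≤ ‖v'‖ + ‖u'‖ := norm_sub_le _ _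
        _ = 2 := by rw [hun, hvn]; norm_num
    refine h2.trans ?_
    have heq : ε / g + 6 * ε ^ 2 / g ^ 2 = (ε * g + 6 * ε ^ 2) / g ^ 2 := by
      field_simp
    rw [heq, le_div_iff₀ (by positivity)]
    have hp1 : g * g ≤ 2 * ε * g := mul_le_mul_of_nonneg_right hcase (le_of_lt hg)
    have hp2 : ε * g ≤ ε * (2 * ε) := mul_le_mul_of_nonneg_left hcase hε0
    nlinarith [hp1, hp2]
  · push_neg at hcase
    have hgε : 0 < g - ε := by linarith
    set y : EuclideanSpace ℝ (Fin p) := (Matrix.toEuclideanCLM (𝕜 := ℝ) A) w - mu • w with hydef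
    have hyu : (inner ℝ u' y : ℝ) = 0 := by
      rw [hydef, inner_sub_right, real_inner_smul_right,
        ← inner_clm_left A hA u' w, hu2, real_inner_smul_left, hcw]
      ring
    have hadd : Matrix.toEuclideanCLM (𝕜 := ℝ) (A + B)
        = Matrix.toEuclideanCLM (𝕜 := ℝ) A + Matrix.toEuclideanCLM (𝕜 := ℝ) B := map_add _ _ _
    have hAv : (Matrix.toEuclideanCLM (𝕜 := ℝ) A) v'
        = mu • v' - (Matrix.toEuclideanCLM (𝕜 := ℝ) B) v' := by
      rw [hadd, ContinuousLinearMap.add_apply] at hv2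
      rw [← hv2]; abel
    have hyB : y = -((Matrix.toEuclideanCLM (𝕜 := ℝ) B) v') - (c * (lam - mu)) • u' := by
      rw [hydef, hwdef, map_sub, (Matrix.toEuclideanCLM (𝕜 := ℝ) A).map_smul, hAv, hu2]
      module
    have hynorm : ‖y‖ ≤ ε := by
      have h1 : ‖y‖ ^ 2 ≤ ‖y‖ * ε := by
        have h2 : (inner ℝ y y : ℝ)
            = inner ℝ y (-((Matrix.toEuclideanCLM (𝕜 := ℝ) B) v'))
              - (c * (lam - mu)) * inner ℝ y u' := by
          nth_rewrite 2 [hyB]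
          rw [inner_sub_right, real_inner_smul_right]
        have h3 : (inner ℝ y u' : ℝ) = 0 := by rw [real_inner_comm]; exact hyu
        rw [h3, mul_zero, sub_zero] at h2
        calc ‖y‖ ^ 2 = inner ℝ y y := (real_inner_self_eq_norm_sq y).symm
          _ = inner ℝ y (-((Matrix.toEuclideanCLM (𝕜 := ℝ) B) v')) := h2
          _ ≤ ‖y‖ * ‖-((Matrix.toEuclideanCLM (𝕜 := ℝ) B) v')‖ := real_inner_le_norm _ _
          _ = ‖y‖ * ‖(Matrix.toEuclideanCLM (𝕜 := ℝ) B) v'‖ := by rw [norm_neg]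
          _ ≤ ‖y‖ * (ε * ‖v'‖) := by
              gcongr
              exact (Matrix.toEuclideanCLM (𝕜 := ℝ) B).le_opNorm _
          _ = ‖y‖ * ε := by rw [hvn, mul_one]
      rcases eq_or_lt_of_le (norm_nonneg y) with h0 | h0
      · rw [← h0]; exact hε0
      · nlinarith
    set i0 : Fin p := Tuple.sort hA.eigenvalues (Fin.rev r) with hi0
    have hlam_i0 : hA.eigenvalues i0 = lam := rfl
    have hgapi : ∀ i, i ≠ i0 → g ≤ |hA.eigenvalues i - lam| := by
      intro i hi
      have hj : Fin.rev ((Tuple.sort hA.eigenvalues).symm i) ≠ r := by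
        intro h
        apply hi
        rw [hi0, ← h, Fin.rev_rev, Equiv.apply_symm_apply]
      have h1 := hgap _ hj
      rw [hlamdef]
      simp [sortedEig, Fin.rev_rev] at h1; exact h1
    have hrepru : ∀ i, i ≠ i0 → hA.eigenvectorBasis.repr u' i = 0 := by
      intro i hi
      have h1 : hA.eigenvalues i * hA.eigenvectorBasis.repr u' i
          = lam * hA.eigenvectorBasis.repr u' i := by
        have h2 := repr_clm hA u' i
        rw [hu2, _root_.map_smul] at h2
        simp only [PiLp.smul_apply, smul_eq_mul] at h2
        exact h2.symm
      have hne : hA.eigenvalues i ≠ lam := by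
        intro h
        have := hgapi i hi
        rw [h] at this
        simp at this
        linarith
      have h3 : (hA.eigenvalues i - lam) * hA.eigenvectorBasis.repr u' i = 0 := by ring_nf; linarith [h1]
      exact (mul_eq_zero.mp h3).resolve_left (sub_ne_zero.mpr hne)
    have hreprw0 : hA.eigenvectorBasis.repr w i0 = 0 := by
      have hsum : (0:ℝ) = ∑ i, hA.eigenvectorBasis.repr u' i * hA.eigenvectorBasis.repr w i := by
        rw [← inner_eq_sum_repr]; exact hcw.symm
      rw [Finset.sum_eq_single i0 (fun i _ hi => by rw [hrepru i hi, zero_mul])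
        (fun h => absurd (Finset.mem_univ i0) h)] at hsum
      have hu0 : hA.eigenvectorBasis.repr u' i0 ≠ 0 := by
        intro h0
        have h4 := norm_sq_eq_sum_repr hA.eigenvectorBasis u'
        rw [hun2] at h4
        have h5 : ∑ i, hA.eigenvectorBasis.repr u' i ^ 2 = 0 := by
          refine Finset.sum_eq_zero fun i _ => ?_
          by_cases hii : i = i0
          · rw [hii, h0]; ring
          · rw [hrepru i hii]; ring
        rw [h5] at h4
        norm_num at h4
      exact (mul_eq_zero.mp hsum.symm).resolve_left hu0
    have hlow : (g - ε) * ‖w‖ ≤ ‖y‖ := by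
      have h1 : ((g - ε) * ‖w‖) ^ 2 ≤ ‖y‖ ^ 2 := by
        rw [mul_pow, norm_sq_eq_sum_repr hA.eigenvectorBasis w,
          norm_sq_eq_sum_repr hA.eigenvectorBasis y, Finset.mul_sum]
        refine Finset.sum_le_sum fun i _ => ?_
        have hyi : hA.eigenvectorBasis.repr y i
            = (hA.eigenvalues i - mu) * hA.eigenvectorBasis.repr w i := by
          rw [hydef, map_sub, _root_.map_smul]
          have := repr_clm hA w i
          simp only [PiLp.sub_apply, PiLp.smul_apply, smul_eq_mul]
          rw [this]; ring
        rw [hyi, mul_pow]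
        by_cases hii : i = i0
        · rw [hii, hreprw0]; simp
        · have h2 := hgapi i hii
          have h3 : g - ε ≤ |hA.eigenvalues i - mu| := by
            have h4 := abs_sub_le (hA.eigenvalues i) mu lam
            have h5 : |mu - lam| ≤ ε := hWeyl
            calc g - ε ≤ |hA.eigenvalues i - lam| - |mu - lam| := by linarith
              _ ≤ |hA.eigenvalues i - mu| := by linarith
          have h6 := mul_self_le_mul_self (le_of_lt hgε) h3
          nlinarith [sq_nonneg (hA.eigenvectorBasis.repr w i), sq_abs (hA.eigenvalues i - mu)]
      nlinarith [norm_nonneg y, norm_nonneg w, mul_nonneg (le_of_lt hgε) (norm_nonneg w)]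
    have hwε : (g - ε) * ‖w‖ ≤ ε := hlow.trans hynorm
    have ht0 : 0 ≤ ‖w‖ := norm_nonneg w
    have hd : ‖v' - u'‖ ^ 2 ≤ ‖w‖ ^ 2 + ‖w‖ ^ 4 := by
      have h1 : (inner ℝ v' u' : ℝ) = c := by rw [real_inner_comm, ← hcdef]
      have hnv : ‖v' - u'‖ ^ 2 = 2 - 2 * c := by
        rw [norm_sub_sq_real, hvn2, hun2, h1]; ring
      have hwn2 : ‖w‖ ^ 4 = (1 - c ^ 2) ^ 2 := by
        rw [show ‖w‖ ^ 4 = (‖w‖ ^ 2) ^ 2 by ring, hwn]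
      nlinarith [hwn, hwn2, hnv,
        mul_nonneg (mul_nonneg hc0 (sq_nonneg (1 - c))) (by linarith : (0:ℝ) ≤ c + 2)]
    have ht1 : ‖w‖ ^ 2 ≤ 1 := by nlinarith [hwn, sq_nonneg c]
    exact final_arith hg hε0 ht0 ht1 hwε hcase (norm_nonneg _) hd
end
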